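/- Slope of the Gallager function at zero: for E₀(ρ, Q, W) = −log ∑_y (∑_x Q(x) W(y|x)^{1/(1+ρ)})^{1+ρ}, the derivative ∂E₀/∂ρ at ρ = 0 equals the mutual information I(X;Y) under the joint pmf Q(x)W(y|x). -/

import Mathlib

open Finset

/-- The Gallager function (natural logarithm). -/
noncomputable def gallagerE0 {X Y : Type*} [Fintype X] [Fintype Y]
    (Q : X → ℝ) (W : X → Y → ℝ) (ρ : ℝ) : ℝ :=
  -Real.log (∑ y : Y, (∑ x : X, Q x * W x y ^ (1 / (1 + ρ))) ^ (1 + ρ))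

/-- Mutual information `I(X;Y)` under the joint pmf `Q(x)W(y|x)` (natural logarithm). -/
noncomputable def mutInfo {X Y : Type*} [Fintype X] [Fintype Y]
    (Q : X → ℝ) (W : X → Y → ℝ) : ℝ :=
  ∑ x : X, ∑ y : Y, Q x * W x y * Real.log (W x y / ∑ x' : X, Q x' * W x' y)

/-- Slope of the Gallager function at zero: `∂E₀/∂ρ` at `ρ = 0` equals the mutual
information `I(X;Y)` under the joint pmf `Q(x)W(y|x)`. -/
theorem gallagerE0_deriv_at_zero {X Y : Type*} [Fintype X] [Fintype Y]
    (Q : X → ℝ) (hQ : ∀ x, 0 ≤ Q x) (hQsum : ∑ x, Q x = 1)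
    (W : X → Y → ℝ) (hW : ∀ x y, 0 < W x y) (hWsum : ∀ x, ∑ y, W x y = 1) :
    HasDerivAt (gallagerE0 Q W) (mutInfo Q W) 0 := by
  set P : Y → ℝ := fun y => ∑ x : X, Q x * W x y with hPdef
  have hP : ∀ y, 0 < P y := by
    intro y
    obtain ⟨x₀, hx₀⟩ : ∃ x, 0 < Q x := by
      by_contra h
      push_neg at h
      have : ∑ x, Q x = 0 := Finset.sum_eq_zero fun x _ => le_antisymm (h x) (hQ x)
      rw [this] at hQsum; norm_num at hQsum
    exact Finset.sum_pos' (fun x _ => mul_nonneg (hQ x) (hW x y).le)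
      ⟨x₀, Finset.mem_univ x₀, mul_pos hx₀ (hW x₀ y)⟩
  -- derivative of u(ρ) = 1/(1+ρ) at 0 is -1
  have hu : HasDerivAt (fun ρ : ℝ => 1 / (1 + ρ)) (-1) 0 := by
    have h1 : HasDerivAt (fun ρ : ℝ => 1 + ρ) 1 0 := by
      simpa using (hasDerivAt_id (0 : ℝ)).const_add (1 : ℝ)
    have := h1.inv (by norm_num : (1 : ℝ) + 0 ≠ 0)
    simpa [one_div, Pi.inv_def] using this
  -- derivative of ρ ↦ W x y ^ (1/(1+ρ)) at 0
  have hWd : ∀ x y, HasDerivAt (fun ρ : ℝ => W x y ^ (1 / (1 + ρ)))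
      (-(W x y * Real.log (W x y))) 0 := by
    intro x y
    have h1 : HasDerivAt (fun t : ℝ => W x y ^ t)
        (W x y ^ ((1 : ℝ) / (1 + 0)) * Real.log (W x y)) ((1 : ℝ) / (1 + 0)) :=
      (Real.hasStrictDerivAt_const_rpow (hW x y) _).hasDerivAt
    have := h1.comp 0 hu
    simpa [Real.rpow_one, Function.comp_def] using this
  -- derivative of S_y
  have hS : ∀ y, HasDerivAt (fun ρ : ℝ => ∑ x : X, Q x * W x y ^ (1 / (1 + ρ)))
      (∑ x : X, -(Q x * (W x y * Real.log (W x y)))) 0 := by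
    intro y
    refine HasDerivAt.fun_sum fun x _ => ?_
    simpa [mul_neg] using (hWd x y).const_mul (Q x)
  have hS0 : ∀ y, (∑ x : X, Q x * W x y ^ (1 / (1 + (0:ℝ)))) = P y := by
    intro y; simp [hPdef]
  -- derivative of g_y = S_y ^ (1+ρ)
  have hg : ∀ y, HasDerivAt (fun ρ : ℝ => (∑ x : X, Q x * W x y ^ (1 / (1 + ρ))) ^ (1 + ρ))
      ((∑ x : X, -(Q x * (W x y * Real.log (W x y)))) + P y * Real.log (P y)) 0 := by
    intro y
    have h1 : HasDerivAt (fun ρ : ℝ => 1 + ρ) 1 0 := by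
      simpa using (hasDerivAt_id (0 : ℝ)).const_add (1 : ℝ)
    have := (hS y).rpow h1 (by rw [hS0 y]; exact hP y)
    rw [hS0 y] at this
    simpa [Real.rpow_one] using this
  -- derivative of F
  set D : ℝ := ∑ y : Y, ((∑ x : X, -(Q x * (W x y * Real.log (W x y)))) + P y * Real.log (P y))
    with hDdef
  have hF : HasDerivAt (fun ρ : ℝ => ∑ y : Y, (∑ x : X, Q x * W x y ^ (1 / (1 + ρ))) ^ (1 + ρ))
      D 0 := HasDerivAt.fun_sum fun y _ => hg y
  have hF0 : (∑ y : Y, (∑ x : X, Q x * W x y ^ (1 / (1 + (0:ℝ)))) ^ (1 + (0:ℝ))) = 1 := by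
    simp only [hS0, add_zero, Real.rpow_one, hPdef]
    rw [Finset.sum_comm]
    simp [← Finset.mul_sum, hWsum, hQsum]
  -- derivative of E₀
  have hlog : HasDerivAt (gallagerE0 Q W) (-(D / 1)) 0 := by
    have := (Real.hasDerivAt_log (by rw [hF0]; norm_num)).comp 0 hF
    rw [hF0] at this
    unfold gallagerE0
    simpa [div_eq_inv_mul, Function.comp_def] using this.fun_neg
  have hD : -(D / 1) = mutInfo Q W := by
    have hmi : mutInfo Q W
        = ∑ y : Y, ∑ x : X,
            (Q x * W x y * Real.log (W x y) - Q x * W x y * Real.log (P y)) := by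
      rw [mutInfo, Finset.sum_comm]
      refine Finset.sum_congr rfl fun y _ => Finset.sum_congr rfl fun x _ => ?_
      rw [Real.log_div (hW x y).ne' (hP y).ne', mul_sub]
    rw [div_one, hDdef, hmi, ← Finset.sum_neg_distrib]
    refine Finset.sum_congr rfl fun y _ => ?_
    rw [Finset.sum_sub_distrib]
    have hPy : P y * Real.log (P y) = ∑ x : X, Q x * W x y * Real.log (P y) := by
      simp only [hPdef, Finset.sum_mul]
    rw [hPy, Finset.sum_neg_distrib]
    ring_nf
    congr 1; refine Finset.sum_congr rfl fun x _ => by ring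
  rwa [hD] at hlog
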